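/- If the multiplication operator M_f is bounded on H_E and Σ_{x∈X} |f(x)|√(c(x)R(x)) < ∞, then the range of M_f is contained in Fin, the energy-closure of the span of Dirac masses. -/

import Mathlib

open scoped BigOperators ComplexOrder Classical

/-- A (resistance) network: a connected weighted graph with symmetric
nonnegative conductances, no self-loops, and finite total conductance at
each vertex. -/
structure Network (V : Type*) where
  c : V → V → ℝ
  nonneg : ∀ x y, 0 ≤ c x y
  symm : ∀ x y, c x y = c y x
  loopless : ∀ x, c x x = 0
  summ : ∀ x, Summable fun y => c x y
  connected : ∀ x y : V, Relation.ReflTransGen (fun a b => 0 < c a b) x y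

namespace Network

variable {V : Type*}

/-- Total conductance `c(x) = Σ_y c(x,y)`. -/
noncomputable def totalCond (N : Network V) (x : V) : ℝ := ∑' y, N.c x y

/-- The (sesquilinear) energy form `E(u,v)`. -/
noncomputable def energy (N : Network V) (u v : V → ℂ) : ℂ :=
  (1/2) * ∑' p : V × V,
    (N.c p.1 p.2 : ℂ) * (starRingEnd ℂ (u p.1) - starRingEnd ℂ (u p.2)) * (v p.1 - v p.2)

/-- The (real) energy `E(u) = (1/2) Σ c(x,y)|u(x)-u(y)|²`. -/
noncomputable def energyR (N : Network V) (u : V → ℂ) : ℝ :=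
  (1/2) * ∑' p : V × V, N.c p.1 p.2 * ‖u p.1 - u p.2‖ ^ 2

/-- `u` has finite energy iff the defining sum converges (absolutely). -/
def FiniteEnergy (N : Network V) (u : V → ℂ) : Prop :=
  Summable fun p : V × V => N.c p.1 p.2 * ‖u p.1 - u p.2‖ ^ 2

/-- The graph Laplacian `(Δu)(x) = Σ_y c(x,y)(u(x)-u(y))`. -/
noncomputable def lap (N : Network V) (u : V → ℂ) (x : V) : ℂ :=
  ∑' y, (N.c x y : ℂ) * (u x - u y)

end Network

/-- The Dirac mass at `x`. -/
noncomputable def delta {V : Type*} (x : V) : V → ℂ := fun y => if y = x then 1 else 0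

open scoped InnerProductSpace ComplexOrder BigOperators Classical

/-- Dirac's rank-one operator `|a⟩⟨b| : u ↦ ⟪b,u⟫ • a`. -/
noncomputable def rankOne {H : Type*} [NormedAddCommGroup H] [InnerProductSpace ℂ H]
    (a b : H) : H →L[ℂ] H := (innerSL ℂ b).smulRight a

/-- if `M_f` is bounded and `Σ |f(x)|√(c(x)R(x)) < ∞`, then the
range of `M_f` lies in `Fin`, the closure of the span of the Dirac masses. -/
theorem stmt15 {V H : Type*} [NormedAddCommGroup H] [InnerProductSpace ℂ H] [CompleteSpace H]
    (N : Network V) (o : V) (v δ : V → H)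
    (hdense : Dense (↑(Submodule.span ℂ (v '' {y | y ≠ o})) : Set H))
    (hδ : ∀ x y : V, x ≠ o → y ≠ o →
      ⟪v y, δ x⟫_ℂ = if y = x then 1 else 0)
    (hc : ∀ x : V, x ≠ o → ‖δ x‖ ^ 2 = N.totalCond x)
    (f : V → ℂ) (hfo : f o = 0)
    (M : H →L[ℂ] H)
    (hM : ∀ (u : H) (y : V), y ≠ o → ⟪v y, M u⟫_ℂ = f y * ⟪v y, u⟫_ℂ)
    (hsum : Summable fun x : V => ‖f x‖ * Real.sqrt (N.totalCond x * ‖v x‖ ^ 2)) :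
    ∀ u : H, M u ∈ (Submodule.span ℂ (Set.range δ)).topologicalClosure := by
  intro u
  -- summability of the rank-one expansion
  have hcnn : ∀ x : V, 0 ≤ N.totalCond x := by
    intro x
    exact tsum_nonneg (fun y => N.nonneg x y)
  have hbound : ∀ x : V, ‖(f x * ⟪v x, u⟫_ℂ) • δ x‖ ≤
      ‖u‖ * (‖f x‖ * Real.sqrt (N.totalCond x * ‖v x‖ ^ 2)) := by
    intro x
    by_cases hx : x = o
    · subst hx
      simp [hfo]
    · have hδx : ‖δ x‖ = Real.sqrt (N.totalCond x) := by
        rw [← hc x hx, Real.sqrt_sq (norm_nonneg _)]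
      rw [norm_smul, norm_mul]
      have h1 : ‖⟪v x, u⟫_ℂ‖ ≤ ‖v x‖ * ‖u‖ := norm_inner_le_norm _ _
      have h2 : Real.sqrt (N.totalCond x * ‖v x‖ ^ 2)
          = Real.sqrt (N.totalCond x) * ‖v x‖ := by
        rw [Real.sqrt_mul (hcnn x), Real.sqrt_sq (norm_nonneg _)]
      rw [h2, hδx]
      calc ‖f x‖ * ‖⟪v x, u⟫_ℂ‖ * Real.sqrt (N.totalCond x)
          ≤ ‖f x‖ * (‖v x‖ * ‖u‖) * Real.sqrt (N.totalCond x) := by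
            gcongr
        _ = ‖u‖ * (‖f x‖ * (Real.sqrt (N.totalCond x) * ‖v x‖)) := by ring
  have hsummable : Summable fun x : V => (f x * ⟪v x, u⟫_ℂ) • δ x :=
    Summable.of_norm_bounded (hsum.mul_left ‖u‖) hbound
  set S := ∑' x : V, (f x * ⟪v x, u⟫_ℂ) • δ x with hS
  have hHasSum := hsummable.hasSum
  -- S lies in the closure of the span of the Dirac masses
  have hSmem : S ∈ (Submodule.span ℂ (Set.range δ)).topologicalClosure := by
    have hclosed : IsClosed
        (↑(Submodule.span ℂ (Set.range δ)).topologicalClosure : Set H) :=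
      Submodule.isClosed_topologicalClosure _
    refine hclosed.mem_of_tendsto hHasSum (Filter.Eventually.of_forall ?_)
    intro s
    exact Submodule.sum_mem _ fun x _ =>
      Submodule.le_topologicalClosure _
        (Submodule.smul_mem _ _ (Submodule.subset_span ⟨x, rfl⟩))
  -- M u = S, by testing against the dense family v
  have hinner : ∀ y : V, y ≠ o → ⟪v y, M u - S⟫_ℂ = 0 := by
    intro y hy
    have hmap : ⟪v y, S⟫_ℂ = ∑' x : V, (f x * ⟪v x, u⟫_ℂ) * ⟪v y, δ x⟫_ℂ := by
      have := (innerSL ℂ (v y)).map_tsum hsummable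
      simpa [inner_smul_right, mul_comm] using this
    have hts : (∑' x : V, (f x * ⟪v x, u⟫_ℂ) * ⟪v y, δ x⟫_ℂ)
        = f y * ⟪v y, u⟫_ℂ := by
      rw [tsum_eq_single y]
      · rw [hδ y y hy hy]
        simp
      · intro x hxy
        by_cases hx : x = o
        · simp [hx, hfo]
        · rw [hδ x y hx hy]
          simp [hxy.symm]
    rw [inner_sub_right, hmap, hts, hM u y hy, sub_self]
  have hD0 : M u - S = 0 := by
    set K := Submodule.span ℂ (v '' {y | y ≠ o}) with hK
    have hKtop : Kᗮ = ⊥ :=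
      Submodule.topologicalClosure_eq_top_iff.mp
        (SetLike.ext' (hdense.closure_eq))
    have hmem : M u - S ∈ Kᗮ := by
      rw [Submodule.mem_orthogonal]
      intro w hw
      induction hw using Submodule.span_induction with
      | mem w hw =>
        obtain ⟨y, hy, rfl⟩ := hw
        exact hinner y hy
      | zero => simp
      | add a b _ _ ha hb => rw [inner_add_left, ha, hb, add_zero]
      | smul a w _ hw => rw [inner_smul_left, hw, mul_zero]
    rw [hKtop] at hmem
    simpa using hmem
  have : M u = S := by
    have := sub_eq_zero.mp hD0
    exact this
  rw [this]
  exact hSmem
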